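/- Let X be a simple graph on n vertices. If X is acyclic (its girth is infinite), then FS(X, Star_n) is acyclic (its girth is infinite). -/

import Mathlib

open SimpleGraph


open SimpleGraph

/-- The friends-and-strangers graph `FS X Y`: its vertices are the bijections from `V(X)`
to `V(Y)`, with `σ, τ` adjacent iff they differ by a swap along an edge of `X` whose
images under `σ` form an edge of `Y`. -/
def FS {V W : Type*} (X : SimpleGraph V) (Y : SimpleGraph W) : SimpleGraph (V ≃ W) where
  Adj σ τ := ∃ a b : V, X.Adj a b ∧ Y.Adj (σ a) (σ b) ∧ τ a = σ b ∧ τ b = σ a ∧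
      ∀ c : V, c ≠ a → c ≠ b → τ c = σ c
  symm := by
    refine ⟨?_⟩
    rintro σ τ ⟨a, b, hX, hY, h1, h2, h3⟩
    refine ⟨a, b, hX, ?_, h2.symm, h1.symm, fun c hca hcb => (h3 c hca hcb).symm⟩
    rw [h1, h2]; exact hY.symm
  loopless := by
    refine ⟨?_⟩
    rintro σ ⟨a, b, hX, hY, h1, h2, h3⟩
    exact hY.ne h1

/-- The star graph on `Fin n`: the vertex with value `n - 1` (playing the role of the
vertex `n` of `{1, …, n}`) is adjacent to all other vertices, and there are no
other edges. -/
def starGraph (n : ℕ) : SimpleGraph (Fin n) where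
  Adj a b := a ≠ b ∧ (a.val = n - 1 ∨ b.val = n - 1)
  symm := by refine ⟨?_⟩; rintro a b ⟨h1, h2⟩; exact ⟨h1.symm, h2.symm⟩
  loopless := by refine ⟨?_⟩; rintro a ⟨h, _⟩; exact h rfl


namespace FSProof

lemma getVert_map {V W : Type*} {G : SimpleGraph V} {G' : SimpleGraph W} (f : G →g G')
    {u v : V} (p : G.Walk u v) (i : ℕ) : (p.map f).getVert i = f (p.getVert i) := by
  induction p generalizing i with
  | nil => simp [Walk.getVert]
  | cons h q ih =>
    cases i with
    | zero => simp
    | succ j => simpa [Walk.getVert_cons_succ] using ih j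

lemma support_getElem {V : Type*} {G : SimpleGraph V} {u v : V} (p : G.Walk u v) :
    ∀ (i : ℕ) (hi : i < p.support.length), p.support[i] = p.getVert i := by
  induction p with
  | nil =>
    intro i hi
    simp only [Walk.support_nil, List.length_singleton] at hi
    have : i = 0 := by omega
    subst this
    rfl
  | cons h q ih =>
    intro i hi
    cases i with
    | zero => simp
    | succ j =>
      simp only [Walk.support_cons, List.getElem_cons_succ, Walk.getVert_cons_succ]
      exact ih j (by simpa using hi)

lemma cycle_getVert_inj {V : Type*} {G : SimpleGraph V} {u : V} {c : G.Walk u u}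
    (hc : c.IsCycle) {j k : ℕ} (hj1 : 1 ≤ j) (hj2 : j ≤ c.length) (hk1 : 1 ≤ k)
    (hk2 : k ≤ c.length) (h : c.getVert j = c.getVert k) : j = k := by
  have hn := hc.support_nodup
  have hlen : c.support.tail.length = c.length := by
    simp [List.length_tail, Walk.length_support]
  have hjl : j - 1 < c.support.tail.length := by omega
  have hkl : k - 1 < c.support.tail.length := by omega
  have e1 : c.support.tail[j-1]'hjl = c.getVert j := by
    rw [List.getElem_tail, support_getElem]
    congr 1; omega
  have e2 : c.support.tail[k-1]'hkl = c.getVert k := by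
    rw [List.getElem_tail, support_getElem]
    congr 1; omega
  have := (hn.getElem_inj_iff).mp (e1.trans (h.trans e2.symm))
  omega

lemma unique_parent {V : Type*} [DecidableEq V] {G : SimpleGraph V} (hG : G.IsAcyclic) {v u x y : V}
    (hr : G.Reachable v u) (hx : G.Adj u x) (hy : G.Adj u y)
    (hdx : G.dist v x ≤ G.dist v u) (hdy : G.dist v y ≤ G.dist v u) : x = y := by
  obtain ⟨P, hP, hPl⟩ := hr.exists_path_of_dist
  have key : ∀ z, G.Adj u z → G.dist v z ≤ G.dist v u → z = P.getVert (P.length - 1) := by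
    intro z hz hdz
    obtain ⟨Q, hQ, hQl⟩ := (hr.trans hz.reachable).exists_path_of_dist
    by_cases hu : u ∈ Q.support
    · exfalso
      have hsplit := Q.take_spec hu
      have ht : (Q.takeUntil u hu).IsPath := hQ.takeUntil hu
      have hpq := isAcyclic_iff_path_unique.mp hG ⟨Q.takeUntil u hu, ht⟩ ⟨P, hP⟩
      have hteq : Q.takeUntil u hu = P := congrArg Subtype.val hpq
      have hlen : (Q.takeUntil u hu).length + (Q.dropUntil u hu).length = Q.length := by
        rw [← Walk.length_append, hsplit]
      have hdrop0 : (Q.dropUntil u hu).length = 0 := by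
        rw [hteq] at hlen
        omega
      exact hz.ne (Walk.eq_of_length_eq_zero hdrop0)
    · have hR : (Q.concat hz.symm).IsPath := by
        rw [Walk.isPath_def, Walk.support_concat]
        simp only [List.concat_eq_append, List.nodup_append, List.nodup_singleton,
          List.mem_singleton]
        refine ⟨hQ.support_nodup, trivial, ?_⟩
        intro a ha
        rintro _ rfl rfl
        exact hu ha
      have hpq := isAcyclic_iff_path_unique.mp hG ⟨Q.concat hz.symm, hR⟩ ⟨P, hP⟩
      have heq : Q.concat hz.symm = P := congrArg Subtype.val hpq
      have : P.getVert (P.length - 1) = z := by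
        rw [← heq, Walk.length_concat, Nat.add_sub_cancel, Walk.concat_eq_append,
          Walk.getVert_append]
        simp
      exact this.symm
  rw [key x hx hdx, key y hy hdy]

lemma forest_no_backtrack {V : Type*} {G : SimpleGraph V} (hG : G.IsAcyclic) {v : V}
    (w : G.Walk v v) (hw : 0 < w.length) :
    ∃ i, i + 2 ≤ w.length ∧ w.getVert i = w.getVert (i + 2) := by
  classical
  have hreach : ∀ i, G.Reachable v (w.getVert i) := by
    intro i
    rcases le_or_gt i w.length with h | h
    · have hmem : w.getVert i ∈ w.support :=
        Walk.mem_support_iff_exists_getVert.mpr ⟨i, rfl, h⟩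
      exact ⟨w.takeUntil _ hmem⟩
    · rw [Walk.getVert_of_length_le w h.le]
  obtain ⟨i, hiS, hmax⟩ := Finset.exists_max_image (Finset.range (w.length + 1))
    (fun j => G.dist v (w.getVert j)) ⟨0, by simp⟩
  simp only [Finset.mem_range] at hiS hmax
  have him : 0 < G.dist v (w.getVert i) := by
    by_contra h0
    push_neg at h0
    have h1 : G.dist v (w.getVert 1) = 0 :=
      Nat.le_zero.mp (le_trans (hmax 1 (by omega)) h0)
    have hv1 : v = w.getVert 1 := (hreach 1).dist_eq_zero_iff.mp h1
    have hadj := w.adj_getVert_succ hw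
    rw [Walk.getVert_zero, ← hv1] at hadj
    exact G.loopless.irrefl v hadj
  have hi0 : i ≠ 0 := by
    rintro rfl
    rw [Walk.getVert_zero, SimpleGraph.dist_self] at him
    exact Nat.lt_irrefl 0 him
  have hiL : i ≠ w.length := by
    rintro rfl
    rw [Walk.getVert_length, SimpleGraph.dist_self] at him
    exact Nat.lt_irrefl 0 him
  have hiL' : i < w.length := by omega
  refine ⟨i - 1, by omega, ?_⟩
  have h1 : i - 1 + 1 = i := by omega
  have h2 : i - 1 + 2 = i + 1 := by omega
  have A1 : G.Adj (w.getVert i) (w.getVert (i - 1)) := by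
    have := w.adj_getVert_succ (show i - 1 < w.length by omega)
    rw [h1] at this
    exact this.symm
  have A2 : G.Adj (w.getVert i) (w.getVert (i + 1)) := w.adj_getVert_succ hiL'
  have e := unique_parent hG (hreach i) A1 A2 (hmax (i - 1) (by omega)) (hmax (i + 1) (by omega))
  rw [h2]
  exact e

lemma fs_adj {V : Type} [DecidableEq V] {n : ℕ} (hn : 0 < n) (X : SimpleGraph V) {σ τ : V ≃ Fin n}
    (h : (FS X (_root_.starGraph n)).Adj σ τ) :
    X.Adj (σ.symm ⟨n - 1, Nat.sub_lt hn Nat.one_pos⟩) (τ.symm ⟨n - 1, Nat.sub_lt hn Nat.one_pos⟩) ∧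
    τ = (Equiv.swap (σ.symm ⟨n - 1, Nat.sub_lt hn Nat.one_pos⟩)
        (τ.symm ⟨n - 1, Nat.sub_lt hn Nat.one_pos⟩)).trans σ := by
  set ctr : Fin n := ⟨n - 1, Nat.sub_lt hn Nat.one_pos⟩ with hctr
  obtain ⟨a, b, hab, hY, h1, h2, h3⟩ := h
  have hY' : σ a ≠ σ b ∧ ((σ a).val = n - 1 ∨ (σ b).val = n - 1) := hY
  have hcv : ∀ x : Fin n, x.val = n - 1 → x = ctr := fun x hx => Fin.ext (by simp [hctr, hx])
  rcases hY'.2 with hsa | hsb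
  · have hsa' : σ a = ctr := hcv _ hsa
    have ha : σ.symm ctr = a := σ.symm_apply_eq.mpr hsa'.symm
    have hτb : τ b = ctr := by rw [h2, hsa']
    have hb : τ.symm ctr = b := τ.symm_apply_eq.mpr hτb.symm
    refine ⟨by rw [ha, hb]; exact hab, ?_⟩
    apply Equiv.ext
    intro x
    simp only [Equiv.trans_apply, ha, hb]
    by_cases hxa : x = a
    · subst hxa; rw [Equiv.swap_apply_left]; exact h1
    by_cases hxb : x = b
    · subst hxb; rw [Equiv.swap_apply_right]; exact h2
    rw [Equiv.swap_apply_of_ne_of_ne hxa hxb]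
    exact h3 x hxa hxb
  · have hsb' : σ b = ctr := hcv _ hsb
    have hb : σ.symm ctr = b := σ.symm_apply_eq.mpr hsb'.symm
    have hτa : τ a = ctr := by rw [h1, hsb']
    have ha : τ.symm ctr = a := τ.symm_apply_eq.mpr hτa.symm
    refine ⟨by rw [hb, ha]; exact hab.symm, ?_⟩
    apply Equiv.ext
    intro x
    simp only [Equiv.trans_apply, hb, ha]
    by_cases hxb : x = b
    · subst hxb; rw [Equiv.swap_apply_left]; exact h2
    by_cases hxa : x = a
    · subst hxa; rw [Equiv.swap_apply_right]; exact h1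
    rw [Equiv.swap_apply_of_ne_of_ne hxb hxa]
    exact h3 x hxa hxb

end FSProof

open FSProof in
/-- If `X` is acyclic then `FS(X, Star_n)` is acyclic. -/
theorem stmt9 {V : Type} [Fintype V] (n : ℕ) (hV : Fintype.card V = n)
    (X : SimpleGraph V) (hX : X.IsAcyclic) :
    (FS X (_root_.starGraph n)).IsAcyclic := by
  intro σ c hc
  classical
  have hL : 3 ≤ c.length := hc.three_le_length
  have hnn : 0 < n := by
    have h0 : 0 < c.length := by omega
    obtain ⟨a, b, -, hY, -⟩ := c.adj_getVert_succ h0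
    exact (c.getVert 0 a).pos
  set f : (FS X (_root_.starGraph n)) →g X :=
    ⟨fun σ => σ.symm ⟨n - 1, Nat.sub_lt hnn Nat.one_pos⟩,
      fun h => (fs_adj hnn X h).1⟩ with hf
  set w : X.Walk (f σ) (f σ) := c.map f with hwdef
  have hwl : w.length = c.length := Walk.length_map f c
  obtain ⟨i, hi2, heq⟩ := forest_no_backtrack hX w (by omega)
  rw [hwl] at hi2
  rw [hwdef, getVert_map, getVert_map] at heq
  have A1 : (FS X (_root_.starGraph n)).Adj (c.getVert (i + 1)) (c.getVert i) :=
    (c.adj_getVert_succ (by omega)).symm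
  have A2 : (FS X (_root_.starGraph n)).Adj (c.getVert (i + 1)) (c.getVert (i + 2)) :=
    c.adj_getVert_succ (by omega)
  have e1 := (fs_adj hnn X A1).2
  have e2 := (fs_adj hnn X A2).2
  have heq' : (c.getVert i).symm ⟨n - 1, Nat.sub_lt hnn Nat.one_pos⟩
      = (c.getVert (i + 2)).symm ⟨n - 1, Nat.sub_lt hnn Nat.one_pos⟩ := heq
  have hgv : c.getVert i = c.getVert (i + 2) := by
    rw [e1, e2, heq']
  rcases Nat.eq_zero_or_pos i with rfl | hip
  · have h0 : c.getVert c.length = c.getVert 2 :=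
      calc c.getVert c.length = c.getVert 0 := by rw [Walk.getVert_length, Walk.getVert_zero]
        _ = c.getVert 2 := hgv
    have := cycle_getVert_inj hc (by omega) (le_refl _) (by omega) (by omega) h0
    omega
  · have := cycle_getVert_inj hc (by omega) (by omega) (by omega) hi2 hgv
    omega
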